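/- Let E be a Dirichlet form with domain D in L²(X,m), J: dom J = D ∩ L²(X,μ) → L²(X,μ) the inclusion (restriction) map, and for λ>0 let Ě_λ[Ju] := inf{ E_λ[v] : v ∈ dom J, Jv = Ju }. Then the unit contraction operates on Ě_λ: for every u ∈ dom J, (0 ∨ Ju) ∧ 1 ∈ ran J and Ě_λ[(0 ∨ Ju) ∧ 1] ≤ Ě_λ[Ju]. -/

import Mathlib

open MeasureTheory

/-- Memℒp of the unit contraction. -/
lemma memLp_trunc {X : Type*} [MeasurableSpace X] {μ : Measure X} {v : X → ℝ}
    (hv : MemLp v 2 μ) : MemLp (fun x => min (max (v x) 0) 1) 2 μ := by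
  refine MemLp.of_le hv ?_ ?_
  · exact (((continuous_id.max continuous_const).min continuous_const).comp_aestronglyMeasurable
      hv.aestronglyMeasurable : _)
  · filter_upwards with x
    simp only [Real.norm_eq_abs]
    rcases le_or_gt (v x) 0 with h | h
    · simp [max_eq_right h, min_eq_left (by norm_num : (0:ℝ) ≤ 1)]
    · rw [max_eq_left h.le, abs_of_nonneg (le_min h.le zero_le_one), abs_of_pos h]
      exact min_le_left _ _

/-- Let `E` be a Dirichlet form with domain `D ⊆ L²(X,m)` (so the unit
contraction `v ↦ (0 ∨ v) ∧ 1` operates on `E_λ`), `J` the restriction map on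
`dom J = D ∩ L²(X,μ)`, and `Ě_λ[J u] := inf { E_λ[v] : v ∈ dom J, J v = J u }`.  Then
the unit contraction operates on `Ě_λ`: `(0 ∨ J u) ∧ 1 ∈ ran J` and
`Ě_λ[(0 ∨ J u) ∧ 1] ≤ Ě_λ[J u]` for every `u ∈ dom J`. -/
theorem stmt16 {X : Type*} [MeasurableSpace X] (m μ : Measure X)
    (D : Set (X → ℝ)) (E : (X → ℝ) → ℝ)
    (hpos : ∀ v ∈ D, 0 ≤ E v)
    (hDstable : ∀ v ∈ D, (fun x => min (max (v x) 0) 1) ∈ D)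
    (lam : ℝ) (hlam : 0 < lam)
    (hcontract : ∀ v ∈ D,
        E (fun x => min (max (v x) 0) 1)
            + lam * ∫ x, (min (max (v x) 0) 1) ^ 2 ∂m
          ≤ E v + lam * ∫ x, v x ^ 2 ∂m)
    (u : X → ℝ) (hu : u ∈ D) (huμ : MemLp u 2 μ) :
    ((fun x => min (max (u x) 0) 1) ∈ D ∧ MemLp (fun x => min (max (u x) 0) 1) 2 μ) ∧
    sInf {r : ℝ | ∃ v, v ∈ D ∧ MemLp v 2 μ ∧
          (v =ᵐ[μ] fun x => min (max (u x) 0) 1) ∧ r = E v + lam * ∫ x, v x ^ 2 ∂m}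
      ≤ sInf {r : ℝ | ∃ v, v ∈ D ∧ MemLp v 2 μ ∧
          v =ᵐ[μ] u ∧ r = E v + lam * ∫ x, v x ^ 2 ∂m} := by
  refine ⟨⟨hDstable u hu, memLp_trunc huμ⟩, ?_⟩
  set S' := {r : ℝ | ∃ v, v ∈ D ∧ MemLp v 2 μ ∧
      (v =ᵐ[μ] fun x => min (max (u x) 0) 1) ∧ r = E v + lam * ∫ x, v x ^ 2 ∂m}
  have hbdd : BddBelow S' := by
    refine ⟨0, fun r hr => ?_⟩
    obtain ⟨v, hvD, -, -, rfl⟩ := hr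
    have h1 : 0 ≤ ∫ x, v x ^ 2 ∂m := integral_nonneg fun x => sq_nonneg _
    have := hpos v hvD
    nlinarith
  refine le_csInf ⟨E u + lam * ∫ x, u x ^ 2 ∂m, u, hu, huμ, ae_eq_refl _, rfl⟩ ?_
  rintro r ⟨v, hvD, hvμ, hvu, rfl⟩
  refine csInf_le_of_le hbdd ⟨fun x => min (max (v x) 0) 1, hDstable v hvD,
    memLp_trunc hvμ, ?_, rfl⟩ (hcontract v hvD)
  filter_upwards [hvu] with x hx
  simp [hx]
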